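/- Let n be a positive integer, m a non-negative integer, and let 𝓐, 𝓑 ⊆ 2^{[n]} be families of subsets of [n] such that |A ∩ B| ≤ m for every A ∈ 𝓐 and every B ∈ 𝓑. Then |𝓐| · |𝓑| ≤ 2^n · ∑_{t=0}^{m} binom(n, t). Moreover, this bound is attained: the maximum of |𝓐| · |𝓑| over all such pairs of families equals 2^n · ∑_{t=0}^{m} binom(n, t). -/

import Mathlib

open Finset

lemma sum_choose_succ_aux (n m : ℕ) :
    ∑ t ∈ Finset.range (m+1), (n+1).choose t
      = ∑ t ∈ Finset.range (m+1), n.choose t + ∑ t ∈ Finset.range m, n.choose t := by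
  induction m with
  | zero => simp
  | succ k ih =>
      rw [Finset.sum_range_succ, ih, Finset.sum_range_succ (fun t => n.choose t) (k+1),
        Finset.sum_range_succ (fun t => n.choose t) k, Nat.choose_succ_succ]
      ring

lemma arith_aux (a0 a1 b0 b1 F G : ℕ) (h00 : a0*b0 ≤ F) (h01 : a0*b1 ≤ F)
    (h10 : a1*b0 ≤ F) (h11 : a1*b1 ≤ G) :
    (a0+a1)*(b0+b1) ≤ 2*F + 2*G := by
  rcases Nat.eq_zero_or_pos F with hF | hF
  · subst hF
    have h1 : a0*b0 = 0 := Nat.le_zero.mp h00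
    have h2 : a0*b1 = 0 := Nat.le_zero.mp h01
    have h3 : a1*b0 = 0 := Nat.le_zero.mp h10
    nlinarith
  · have hp : (a0*b1)*(a1*b0) ≤ F*G := by
      calc (a0*b1)*(a1*b0) = (a0*b0)*(a1*b1) := by ring
        _ ≤ F*G := Nat.mul_le_mul h00 h11
    have hq : F*(a0*b1) + F*(a1*b0) ≤ F*F + (a0*b1)*(a1*b0) := by nlinarith
    have hs : a0*b1 + a1*b0 ≤ F + G := by
      have : F*(a0*b1 + a1*b0) ≤ F*(F + G) := by
        calc F*(a0*b1 + a1*b0) = F*(a0*b1) + F*(a1*b0) := by ring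
          _ ≤ F*F + (a0*b1)*(a1*b0) := hq
          _ ≤ F*F + F*G := by omega
          _ = F*(F+G) := by ring
      exact Nat.le_of_mul_le_mul_left this hF
    nlinarith

lemma key_aux {α : Type*} [DecidableEq α] (s : Finset α) :
    ∀ (m : ℕ) (𝓐 𝓑 : Finset (Finset α)),
      (∀ A ∈ 𝓐, A ⊆ s) → (∀ B ∈ 𝓑, B ⊆ s) →
      (∀ A ∈ 𝓐, ∀ B ∈ 𝓑, (A ∩ B).card ≤ m) →
      𝓐.card * 𝓑.card ≤ 2 ^ s.card * ∑ t ∈ Finset.range (m+1), s.card.choose t := by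
  induction s using Finset.induction_on with
  | empty =>
      intro m 𝓐 𝓑 h𝓐 h𝓑 _
      have hA : 𝓐 ⊆ {∅} := by
        intro A hA
        simp [Finset.subset_empty.mp (h𝓐 A hA)]
      have hB : 𝓑 ⊆ {∅} := by
        intro B hB
        simp [Finset.subset_empty.mp (h𝓑 B hB)]
      have h1 : 𝓐.card ≤ 1 := by simpa using Finset.card_le_card hA
      have h2 : 𝓑.card ≤ 1 := by simpa using Finset.card_le_card hB
      have h3 : 1 ≤ ∑ t ∈ Finset.range (m+1), Nat.choose 0 t := by
        calc 1 = Nat.choose 0 0 := by simp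
          _ ≤ _ := Finset.single_le_sum (fun i _ => Nat.zero_le _)
                (Finset.mem_range.mpr (Nat.succ_pos m))
      simpa using Nat.mul_le_mul (Nat.mul_le_mul h1 h2) h3
  | @insert x s' hx ih =>
      intro m 𝓐 𝓑 h𝓐 h𝓑 hm
      classical
      set 𝓐0 := 𝓐.filter (fun A => x ∉ A) with h𝓐0
      set 𝓑0 := 𝓑.filter (fun B => x ∉ B) with h𝓑0
      set 𝓐1 := (𝓐.filter (fun A => x ∈ A)).image (fun A => A.erase x) with h𝓐1
      set 𝓑1 := (𝓑.filter (fun B => x ∈ B)).image (fun B => B.erase x) with h𝓑1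
      have hinjA : Set.InjOn (fun A : Finset α => A.erase x)
          (𝓐.filter (fun A => x ∈ A)) := by
        intro A hA B hB h
        simp only [Finset.coe_filter, Set.mem_setOf_eq] at hA hB
        rw [← Finset.insert_erase hA.2, ← Finset.insert_erase hB.2]
        simp only at h
        rw [h]
      have hinjB : Set.InjOn (fun B : Finset α => B.erase x)
          (𝓑.filter (fun B => x ∈ B)) := by
        intro A hA B hB h
        simp only [Finset.coe_filter, Set.mem_setOf_eq] at hA hB
        rw [← Finset.insert_erase hA.2, ← Finset.insert_erase hB.2]
        simp only at h
        rw [h]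
      have hcardA : 𝓐.card = 𝓐0.card + 𝓐1.card := by
        rw [h𝓐1, Finset.card_image_of_injOn hinjA, h𝓐0]
        rw [← Finset.card_filter_add_card_filter_not (s := 𝓐) (p := fun A => x ∉ A)]
        simp
      have hcardB : 𝓑.card = 𝓑0.card + 𝓑1.card := by
        rw [h𝓑1, Finset.card_image_of_injOn hinjB, h𝓑0]
        rw [← Finset.card_filter_add_card_filter_not (s := 𝓑) (p := fun B => x ∉ B)]
        simp
      -- subset facts
      have hsubA0 : ∀ A ∈ 𝓐0, A ⊆ s' := by
        intro A hA
        rw [h𝓐0, Finset.mem_filter] at hA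
        intro a ha
        rcases Finset.mem_insert.mp (h𝓐 A hA.1 ha) with h | h
        · exact absurd (h ▸ ha) hA.2
        · exact h
      have hsubB0 : ∀ B ∈ 𝓑0, B ⊆ s' := by
        intro B hB
        rw [h𝓑0, Finset.mem_filter] at hB
        intro a ha
        rcases Finset.mem_insert.mp (h𝓑 B hB.1 ha) with h | h
        · exact absurd (h ▸ ha) hB.2
        · exact h
      have hsubA1 : ∀ A ∈ 𝓐1, A ⊆ s' := by
        intro A hA
        rw [h𝓐1, Finset.mem_image] at hA
        obtain ⟨A₀, hA₀, rfl⟩ := hA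
        rw [Finset.mem_filter] at hA₀
        intro a ha
        have := Finset.mem_erase.mp ha
        rcases Finset.mem_insert.mp (h𝓐 A₀ hA₀.1 this.2) with h | h
        · exact absurd h this.1
        · exact h
      have hsubB1 : ∀ B ∈ 𝓑1, B ⊆ s' := by
        intro B hB
        rw [h𝓑1, Finset.mem_image] at hB
        obtain ⟨B₀, hB₀, rfl⟩ := hB
        rw [Finset.mem_filter] at hB₀
        intro a ha
        have := Finset.mem_erase.mp ha
        rcases Finset.mem_insert.mp (h𝓑 B₀ hB₀.1 this.2) with h | h
        · exact absurd h this.1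
        · exact h
      -- cross intersection conditions
      have hm00 : ∀ A ∈ 𝓐0, ∀ B ∈ 𝓑0, (A ∩ B).card ≤ m := by
        intro A hA B hB
        exact hm A (Finset.mem_filter.mp hA).1 B (Finset.mem_filter.mp hB).1
      have hm01 : ∀ A ∈ 𝓐0, ∀ B ∈ 𝓑1, (A ∩ B).card ≤ m := by
        intro A hA B hB
        rw [h𝓑1, Finset.mem_image] at hB
        obtain ⟨B₀, hB₀, rfl⟩ := hB
        refine le_trans (Finset.card_le_card ?_) (hm A (Finset.mem_filter.mp hA).1 B₀
          (Finset.mem_filter.mp hB₀).1)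
        exact Finset.inter_subset_inter (le_refl _) (Finset.erase_subset _ _)
      have hm10 : ∀ A ∈ 𝓐1, ∀ B ∈ 𝓑0, (A ∩ B).card ≤ m := by
        intro A hA B hB
        rw [h𝓐1, Finset.mem_image] at hA
        obtain ⟨A₀, hA₀, rfl⟩ := hA
        refine le_trans (Finset.card_le_card ?_) (hm A₀ (Finset.mem_filter.mp hA₀).1 B
          (Finset.mem_filter.mp hB).1)
        exact Finset.inter_subset_inter (Finset.erase_subset _ _) (le_refl _)
      have hm11 : ∀ A ∈ 𝓐1, ∀ B ∈ 𝓑1, (A ∩ B).card + 1 ≤ m := by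
        intro A hA B hB
        rw [h𝓐1, Finset.mem_image] at hA
        rw [h𝓑1, Finset.mem_image] at hB
        obtain ⟨A₀, hA₀, rfl⟩ := hA
        obtain ⟨B₀, hB₀, rfl⟩ := hB
        rw [Finset.mem_filter] at hA₀ hB₀
        have hxin : x ∈ A₀ ∩ B₀ := Finset.mem_inter.mpr ⟨hA₀.2, hB₀.2⟩
        have heq : A₀.erase x ∩ B₀.erase x = (A₀ ∩ B₀).erase x := by
          ext a; simp only [Finset.mem_inter, Finset.mem_erase]; tauto
        rw [heq, Finset.card_erase_of_mem hxin]
        have hpos : 1 ≤ (A₀ ∩ B₀).card := Finset.card_pos.mpr ⟨x, hxin⟩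
        have := hm A₀ hA₀.1 B₀ hB₀.1
        omega
      -- apply IH
      set c := s'.card with hc
      set F := 2 ^ c * ∑ t ∈ Finset.range (m+1), c.choose t with hF
      set G := 2 ^ c * ∑ t ∈ Finset.range m, c.choose t with hG
      have h00 : 𝓐0.card * 𝓑0.card ≤ F := ih m 𝓐0 𝓑0 hsubA0 hsubB0 hm00
      have h01 : 𝓐0.card * 𝓑1.card ≤ F := ih m 𝓐0 𝓑1 hsubA0 hsubB1 hm01
      have h10 : 𝓐1.card * 𝓑0.card ≤ F := ih m 𝓐1 𝓑0 hsubA1 hsubB0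
        (fun A hA B hB => hm10 A hA B hB)
      have h11 : 𝓐1.card * 𝓑1.card ≤ G := by
        cases m with
        | zero =>
            have : 𝓐1 = ∅ ∨ 𝓑1 = ∅ := by
              by_contra h
              push_neg at h
              obtain ⟨A, hA⟩ := h.1
              obtain ⟨B, hB⟩ := h.2
              have := hm11 A hA B hB
              omega
            rcases this with h | h <;> simp [h]
        | succ k =>
            have : ∀ A ∈ 𝓐1, ∀ B ∈ 𝓑1, (A ∩ B).card ≤ k := by
              intro A hA B hB
              have := hm11 A hA B hB
              omega
            exact ih k 𝓐1 𝓑1 hsubA1 hsubB1 this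
      have hrhs : 2 ^ (insert x s').card *
          ∑ t ∈ Finset.range (m+1), ((insert x s').card).choose t = 2*F + 2*G := by
        rw [Finset.card_insert_of_notMem hx, ← hc, sum_choose_succ_aux, hF, hG]
        ring
      rw [hrhs, hcardA, hcardB]
      exact arith_aux _ _ _ _ _ _ h00 h01 h10 h11

/-- Theorem (Frankl): if `𝓐, 𝓑` are families of subsets of `[n]` such that `|A ∩ B| ≤ m` for
all `A ∈ 𝓐`, `B ∈ 𝓑`, then `|𝓐|·|𝓑| ≤ 2^n · ∑_{t=0}^m C(n,t)`; moreover this bound is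
attained by some such pair of families. -/
theorem statement3 (n : ℕ) (hn : 1 ≤ n) (m : ℕ) :
    (∀ 𝓐 𝓑 : Finset (Finset (Fin n)),
      (∀ A ∈ 𝓐, ∀ B ∈ 𝓑, (A ∩ B).card ≤ m) →
      𝓐.card * 𝓑.card ≤ 2 ^ n * ∑ t ∈ Finset.range (m + 1), n.choose t) ∧
    (∃ 𝓐 𝓑 : Finset (Finset (Fin n)),
      (∀ A ∈ 𝓐, ∀ B ∈ 𝓑, (A ∩ B).card ≤ m) ∧
      𝓐.card * 𝓑.card = 2 ^ n * ∑ t ∈ Finset.range (m + 1), n.choose t) := by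
  constructor
  · intro 𝓐 𝓑 hm
    have := key_aux (Finset.univ : Finset (Fin n)) m 𝓐 𝓑
      (fun A _ => Finset.subset_univ A) (fun B _ => Finset.subset_univ B) hm
    simpa using this
  · refine ⟨Finset.univ, (Finset.range (m+1)).biUnion
      (fun t => Finset.powersetCard t Finset.univ), ?_, ?_⟩
    · intro A _ B hB
      rw [Finset.mem_biUnion] at hB
      obtain ⟨t, ht, hB⟩ := hB
      have hBt : B.card = t := (Finset.mem_powersetCard.mp hB).2
      have : (A ∩ B).card ≤ B.card := Finset.card_le_card (Finset.inter_subset_right)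
      rw [hBt] at this
      exact le_trans this (Nat.lt_succ_iff.mp (Finset.mem_range.mp ht))
    · have hcard1 : (Finset.univ : Finset (Finset (Fin n))).card = 2 ^ n := by
        simp [Finset.card_univ]
      have hcard2 : ((Finset.range (m+1)).biUnion
          (fun t => Finset.powersetCard t (Finset.univ : Finset (Fin n)))).card
          = ∑ t ∈ Finset.range (m+1), n.choose t := by
        rw [Finset.card_biUnion]
        · refine Finset.sum_congr rfl (fun t _ => ?_)
          simp [Finset.card_powersetCard]
        · intro i hi j hj hij
          simp only [Finset.disjoint_left, Finset.mem_powersetCard]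
          rintro B ⟨_, hBi⟩ ⟨_, hBj⟩
          exact hij (hBi ▸ hBj.symm ▸ rfl)
      rw [hcard1, hcard2]
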